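/- Let X be a nonnegative random variable such that E[X^i] ≤ (b₁ + 2 b₂ i)^i for all integers i ≥ 1, where b₁, b₂ ≥ 0 satisfy 4 b₂ e ≤ 1/2 (equivalently the parameter scaling τ ≤ 1/(16(b₁+b₂)) after substitution). Then E[e^X] ≤ e^{2 b₁} + 2. -/
import Mathlib


open MeasureTheory

theorem stmt3 {Ω : Type*} [MeasurableSpace Ω] (P : Measure Ω) [IsProbabilityMeasure P]
    (X : Ω → ℝ) (hX : ∀ ω, 0 ≤ X ω) (b₁ b₂ : ℝ) (hb₁ : 0 ≤ b₁) (hb₂ : 0 ≤ b₂)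
    (hsmall : 4 * b₂ * Real.exp 1 ≤ 1/2)
    (hmom : ∀ i : ℕ, 1 ≤ i → ∫ ω, (X ω) ^ i ∂P ≤ (b₁ + 2 * b₂ * i) ^ i) :
    ∫ ω, Real.exp (X ω) ∂P ≤ Real.exp (2 * b₁) + 2 := by
  by_cases hint : Integrable (fun ω => Real.exp (X ω)) P
  swap
  · rw [integral_undef hint]
    positivity
  have key : ∀ (x : ℝ) (i : ℕ), 0 ≤ x → x ^ i / i.factorial ≤ Real.exp x := by
    intro x i hx
    calc x ^ i / i.factorial
        ≤ ∑ j ∈ Finset.range (i+1), x ^ j / j.factorial := by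
          refine Finset.single_le_sum (f := fun j => x ^ j / (j.factorial : ℝ)) ?_
            (Finset.self_mem_range_succ i)
          intro j _; positivity
      _ ≤ Real.exp x := Real.sum_le_exp_of_nonneg hx _
  have hXae : AEMeasurable X P := by
    have h1 : AEMeasurable (fun ω => Real.exp (X ω)) P := hint.aemeasurable
    have h2 : (fun ω => Real.log (Real.exp (X ω))) = X := by
      funext ω; exact Real.log_exp _
    rw [← h2]
    exact Real.measurable_log.comp_aemeasurable h1
  have hpowint : ∀ i : ℕ, Integrable (fun ω => X ω ^ i / i.factorial) P := by
    intro i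
    refine Integrable.mono hint ((hXae.pow_const i).div_const _).aestronglyMeasurable ?_
    filter_upwards with ω
    rw [Real.norm_eq_abs, Real.norm_eq_abs,
      abs_of_nonneg (div_nonneg (pow_nonneg (hX ω) i) (Nat.cast_nonneg _)),
      abs_of_nonneg (Real.exp_pos _).le]
    exact key _ _ (hX ω)
  set S : ℕ → Ω → ℝ := fun n ω => ∑ i ∈ Finset.range n, X ω ^ i / i.factorial with hS
  have hSint : ∀ n, Integrable (S n) P := fun n =>
    integrable_finset_sum _ (fun i _ => hpowint i)
  have hmono : ∀ ω, Monotone fun n => S n ω := by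
    intro ω
    apply monotone_nat_of_le_succ
    intro n
    simp only [hS, Finset.sum_range_succ]
    have : 0 ≤ X ω ^ n / n.factorial := div_nonneg (pow_nonneg (hX ω) n) (Nat.cast_nonneg _)
    linarith
  have htend : ∀ ω, Filter.Tendsto (fun n => S n ω) Filter.atTop (nhds (Real.exp (X ω))) := by
    intro ω
    have h : HasSum (fun i => X ω ^ i / i.factorial) (Real.exp (X ω)) := by
      rw [Real.exp_eq_exp_ℝ]
      have := NormedSpace.exp_series_hasSum_exp' (𝕂 := ℝ) (X ω)
      simpa [div_eq_inv_mul, smul_eq_mul] using this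
    exact h.tendsto_sum_nat
  have hlim := integral_tendsto_of_tendsto_of_monotone hSint hint (ae_of_all _ hmono)
    (ae_of_all _ htend)
  refine le_of_tendsto hlim (Filter.Eventually.of_forall ?_)
  intro n
  have hrw : ∫ ω, S n ω ∂P = ∑ i ∈ Finset.range n, (∫ ω, X ω ^ i ∂P) / i.factorial := by
    rw [hS]
    rw [integral_finset_sum _ (fun i _ => hpowint i)]
    exact Finset.sum_congr rfl (fun i _ => integral_div _ _)
  rw [hrw]
  have hterm : ∀ i ∈ Finset.range n,
      (∫ ω, X ω ^ i ∂P) / i.factorial ≤ (2*b₁) ^ i / i.factorial + (1/2 : ℝ) ^ i := by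
    intro i _
    rcases Nat.eq_zero_or_pos i with hi0 | hi1
    · subst hi0
      simp
    · have hfac : (0:ℝ) < i.factorial := by positivity
      have h1 : (∫ ω, X ω ^ i ∂P) ≤ (b₁ + 2*b₂*i) ^ i := hmom i hi1
      have h2 : (b₁ + 2*b₂*i) ^ i ≤ (2*b₁) ^ i + (4*b₂*i) ^ i := by
        have hnn : (0:ℝ) ≤ 2*b₂*i := by positivity
        rcases le_total b₁ (2*b₂*i) with h | h
        · have : (b₁ + 2*b₂*i) ^ i ≤ (4*b₂*i) ^ i := by
            apply pow_le_pow_left₀ (by positivity)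
            linarith
          have hpos : (0:ℝ) ≤ (2*b₁) ^ i := by positivity
          linarith
        · have : (b₁ + 2*b₂*i) ^ i ≤ (2*b₁) ^ i := by
            apply pow_le_pow_left₀ (by positivity)
            linarith
          have hpos : (0:ℝ) ≤ (4*b₂*i) ^ i := by positivity
          linarith
      have h3 : (4*b₂*i) ^ i / i.factorial ≤ (1/2 : ℝ) ^ i := by
        have hii : ((i:ℝ)) ^ i / i.factorial ≤ Real.exp 1 ^ i := by
          rw [← Real.exp_nat_mul, mul_one]
          exact key i i (by positivity)
        calc (4*b₂*i) ^ i / i.factorial = (4*b₂) ^ i * ((i:ℝ) ^ i / i.factorial) := by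
              rw [mul_pow]; ring
          _ ≤ (4*b₂) ^ i * Real.exp 1 ^ i := by
              apply mul_le_mul_of_nonneg_left hii (by positivity)
          _ = (4*b₂*Real.exp 1) ^ i := (mul_pow _ _ _).symm
          _ ≤ (1/2 : ℝ) ^ i := pow_le_pow_left₀ (by positivity) hsmall i
      calc (∫ ω, X ω ^ i ∂P) / i.factorial ≤ ((2*b₁) ^ i + (4*b₂*i) ^ i) / i.factorial := by
            gcongr
            exact le_trans h1 h2
        _ = (2*b₁) ^ i / i.factorial + (4*b₂*i) ^ i / i.factorial := add_div _ _ _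
        _ ≤ (2*b₁) ^ i / i.factorial + (1/2 : ℝ) ^ i := by linarith
  calc ∑ i ∈ Finset.range n, (∫ ω, X ω ^ i ∂P) / i.factorial
      ≤ ∑ i ∈ Finset.range n, ((2*b₁) ^ i / i.factorial + (1/2 : ℝ) ^ i) :=
        Finset.sum_le_sum hterm
    _ = (∑ i ∈ Finset.range n, (2*b₁) ^ i / i.factorial)
        + ∑ i ∈ Finset.range n, (1/2 : ℝ) ^ i := Finset.sum_add_distrib
    _ ≤ Real.exp (2*b₁) + 2 :=
        add_le_add (Real.sum_le_exp_of_nonneg (by positivity) n) (sum_geometric_two_le n)
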